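/- For every fixed k ≥ 0, the function f(x) := log B(x, x+k) is convex on (0,∞). -/

import Mathlib

noncomputable def Beta (x y : ℝ) : ℝ := Real.Gamma x * Real.Gamma y / Real.Gamma (x + y)

open MeasureTheory Set Real
open scoped ENNReal

lemma beta_integrand_integrableOn {x y : ℝ} (hx : 0 < x) (hy : 0 < y) :
    IntegrableOn (fun t : ℝ => t ^ (x - 1) * (1 - t) ^ (y - 1)) (Ioo (0 : ℝ) 1) := by
  have hc : IntervalIntegrable
      (fun t : ℝ => (t : ℂ) ^ ((x : ℂ) - 1) * ((1 : ℂ) - t) ^ ((y : ℂ) - 1)) volume 0 1 := by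
    exact Complex.betaIntegral_convergent (by simpa using hx) (by simpa using hy)
  have h1 : IntegrableOn
      (fun t : ℝ => (t : ℂ) ^ ((x : ℂ) - 1) * ((1 : ℂ) - t) ^ ((y : ℂ) - 1))
      (Ioo (0 : ℝ) 1) :=
    ((intervalIntegrable_iff_integrableOn_Ioc_of_le (by norm_num)).mp hc).mono_set
      Ioo_subset_Ioc_self
  have h2 : IntegrableOn
      (fun t : ℝ => ((t : ℂ) ^ ((x : ℂ) - 1) * ((1 : ℂ) - t) ^ ((y : ℂ) - 1)).re)
      (Ioo (0 : ℝ) 1) := h1.re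
  refine MeasureTheory.IntegrableOn.congr_fun h2 (fun t ht => ?_) measurableSet_Ioo
  obtain ⟨ht0, ht1⟩ := ht
  have e1 : ((t : ℂ)) ^ ((x : ℂ) - 1) = ((t ^ (x - 1) : ℝ) : ℂ) := by
    rw [Complex.ofReal_cpow ht0.le]; norm_num
  have e2 : ((1 : ℂ) - t) ^ ((y : ℂ) - 1) = (((1 - t) ^ (y - 1) : ℝ) : ℂ) := by
    rw [show ((1 : ℂ) - t) = (((1 - t : ℝ)) : ℂ) by push_cast; ring,
      Complex.ofReal_cpow (by linarith)]
    norm_num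
  rw [e1, e2, ← Complex.ofReal_mul, Complex.ofReal_re]

lemma Beta_eq_integral {x y : ℝ} (hx : 0 < x) (hy : 0 < y) :
    Beta x y = ∫ t in Ioo (0 : ℝ) 1, t ^ (x - 1) * (1 - t) ^ (y - 1) := by
  have key := Complex.Gamma_mul_Gamma_eq_betaIntegral
    (s := (x : ℂ)) (t := (y : ℂ)) (by simpa using hx) (by simpa using hy)
  have hbi : Complex.betaIntegral (x : ℂ) (y : ℂ) =
      ((∫ t in Ioo (0 : ℝ) 1, t ^ (x - 1) * (1 - t) ^ (y - 1) : ℝ) : ℂ) := by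
    rw [Complex.betaIntegral, intervalIntegral.integral_of_le (by norm_num : (0:ℝ) ≤ 1),
      integral_Ioc_eq_integral_Ioo]
    rw [show (∫ t in Ioo (0:ℝ) 1, (t : ℂ) ^ ((x:ℂ) - 1) * ((1:ℂ) - t) ^ ((y:ℂ) - 1))
        = ∫ t in Ioo (0:ℝ) 1, ((t ^ (x - 1) * (1 - t) ^ (y - 1) : ℝ) : ℂ) from ?_]
    · exact integral_ofReal
    refine setIntegral_congr_fun measurableSet_Ioo (fun t ht => ?_)
    obtain ⟨ht0, ht1⟩ := ht
    have e1 : ((t : ℂ)) ^ ((x : ℂ) - 1) = ((t ^ (x - 1) : ℝ) : ℂ) := by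
      rw [Complex.ofReal_cpow ht0.le]; norm_num
    have e2 : ((1 : ℂ) - t) ^ ((y : ℂ) - 1) = (((1 - t) ^ (y - 1) : ℝ) : ℂ) := by
      rw [show ((1 : ℂ) - t) = (((1 - t : ℝ)) : ℂ) by push_cast; ring,
        Complex.ofReal_cpow (by linarith)]
      norm_num
    rw [e1, e2, ← Complex.ofReal_mul]
  rw [hbi, show ((x : ℂ) + y) = ((x + y : ℝ) : ℂ) by push_cast; ring,
    Complex.Gamma_ofReal, Complex.Gamma_ofReal, Complex.Gamma_ofReal,
    ← Complex.ofReal_mul, ← Complex.ofReal_mul, Complex.ofReal_inj] at key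
  have hG : Real.Gamma (x + y) ≠ 0 := (Real.Gamma_pos_of_pos (by linarith)).ne'
  rw [Beta, key]
  field_simp

lemma Beta_pos {x y : ℝ} (hx : 0 < x) (hy : 0 < y) : 0 < Beta x y :=
  div_pos (mul_pos (Real.Gamma_pos_of_pos hx) (Real.Gamma_pos_of_pos hy))
    (Real.Gamma_pos_of_pos (by linarith))

lemma Beta_holder {k x y a b : ℝ} (hk : 0 ≤ k) (hx : 0 < x) (hy : 0 < y)
    (ha : 0 < a) (hb : 0 < b) (hab : a + b = 1) :
    Beta (a * x + b * y) (a * x + b * y + k)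
      ≤ Beta x (x + k) ^ a * Beta y (y + k) ^ b := by
  set μ := volume.restrict (Ioo (0 : ℝ) 1)
  -- the basic integrands
  set h : ℝ → ℝ → ℝ := fun u t => t ^ (u - 1) * (1 - t) ^ (u + k - 1) with hh
  have hpos : ∀ u : ℝ, ∀ t ∈ Ioo (0 : ℝ) 1, 0 ≤ h u t := by
    intro u t ht
    exact mul_nonneg (rpow_nonneg ht.1.le _) (rpow_nonneg (by linarith [ht.2]) _)
  have hcont : ∀ u : ℝ, ContinuousOn (h u) (Ioo (0 : ℝ) 1) := by
    intro u
    apply ContinuousOn.mul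
    · exact fun t ht => (Real.continuousAt_rpow_const _ _ (Or.inl ht.1.ne')).continuousWithinAt
    · refine fun t ht => ContinuousWithinAt.rpow_const ?_ (Or.inl (by linarith [ht.2]))
      exact (continuous_const.sub continuous_id).continuousWithinAt
  have hint : ∀ u : ℝ, 0 < u → Integrable (h u) μ := by
    intro u hu
    exact beta_integrand_integrableOn hu (by linarith)
  -- Memℒp of h u ^ c for exponent 1/c
  have f_mem_Lp : ∀ {c u : ℝ}, 0 < c → 0 < u →
      MemLp (fun t => h u t ^ c) (ENNReal.ofReal (1 / c)) μ := by
    intro c u hc hu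
    have A : ENNReal.ofReal (1 / c) ≠ 0 := by
      rwa [Ne, ENNReal.ofReal_eq_zero, not_le, one_div_pos]
    have B : ENNReal.ofReal (1 / c) ≠ ∞ := ENNReal.ofReal_ne_top
    have hmeas : AEStronglyMeasurable (fun t => h u t ^ c) μ := by
      refine ContinuousOn.aestronglyMeasurable ?_ measurableSet_Ioo
      exact fun t ht => ((hcont u t ht).rpow_const (Or.inr hc.le))
    rw [← memLp_norm_rpow_iff hmeas A B, ENNReal.toReal_ofReal (one_div_nonneg.mpr hc.le),
      ENNReal.div_self A B, memLp_one_iff_integrable]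
    apply (hint u hu).congr
    refine (Filter.eventuallyEq_of_mem (self_mem_ae_restrict measurableSet_Ioo) fun t ht => ?_).symm
    have h0 : 0 ≤ h u t := hpos u t ht
    rw [norm_of_nonneg (rpow_nonneg h0 _), ← rpow_mul h0, mul_one_div, div_self hc.ne',
      rpow_one]
  have e : Real.HolderConjugate (1 / a) (1 / b) := Real.holderConjugate_one_div ha hb hab
  set z := a * x + b * y with hz
  have hzpos : 0 < z := by positivity
  -- pointwise splitting
  have hsplit : ∀ t ∈ Ioo (0 : ℝ) 1, h z t = h x t ^ a * h y t ^ b := by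
    intro t ht
    obtain ⟨ht0, ht1⟩ := ht
    have h1t : (0 : ℝ) < 1 - t := by linarith
    have e1 : z - 1 = (x - 1) * a + (y - 1) * b := by rw [hz]; nlinarith [hab]
    have e2 : z + k - 1 = (x + k - 1) * a + (y + k - 1) * b := by rw [hz]; nlinarith [hab]
    rw [hh]
    simp only
    rw [mul_rpow (rpow_nonneg ht0.le _) (rpow_nonneg h1t.le _),
      mul_rpow (rpow_nonneg ht0.le _) (rpow_nonneg h1t.le _),
      ← rpow_mul ht0.le, ← rpow_mul h1t.le, ← rpow_mul ht0.le, ← rpow_mul h1t.le,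
      e1, e2, rpow_add ht0, rpow_add h1t]
    ring
  -- Hölder
  have posf : ∀ u : ℝ, 0 ≤ᵐ[μ] fun t => h u t ^ a := by
    intro u
    refine (ae_restrict_iff' measurableSet_Ioo).mpr (ae_of_all _ fun t ht => ?_)
    exact rpow_nonneg (hpos u t ht) a
  have posg : ∀ u : ℝ, 0 ≤ᵐ[μ] fun t => h u t ^ b := by
    intro u
    refine (ae_restrict_iff' measurableSet_Ioo).mpr (ae_of_all _ fun t ht => ?_)
    exact rpow_nonneg (hpos u t ht) b
  have holder := MeasureTheory.integral_mul_le_Lp_mul_Lq_of_nonneg e (posf x) (posg y)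
    (f_mem_Lp ha hx) (f_mem_Lp hb hy)
  rw [Beta_eq_integral hzpos (by linarith), Beta_eq_integral hx (by linarith),
    Beta_eq_integral hy (by linarith)]
  calc ∫ t in Ioo (0:ℝ) 1, t ^ (z - 1) * (1 - t) ^ (z + k - 1)
      = ∫ t in Ioo (0:ℝ) 1, h x t ^ a * h y t ^ b := by
        refine setIntegral_congr_fun measurableSet_Ioo fun t ht => ?_
        have := hsplit t ht
        simpa [hh] using this
    _ ≤ (∫ t in Ioo (0:ℝ) 1, (h x t ^ a) ^ (1/a)) ^ (1 / (1/a))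
          * (∫ t in Ioo (0:ℝ) 1, (h y t ^ b) ^ (1/b)) ^ (1 / (1/b)) := holder
    _ = (∫ t in Ioo (0:ℝ) 1, t ^ (x - 1) * (1 - t) ^ (x + k - 1)) ^ a
          * (∫ t in Ioo (0:ℝ) 1, t ^ (y - 1) * (1 - t) ^ (y + k - 1)) ^ b := by
        rw [one_div_one_div, one_div_one_div]
        congr 2 <;>
        · refine setIntegral_congr_fun measurableSet_Ioo fun t ht => ?_
          rw [← rpow_mul (hpos _ t ht)]
          simp [hh, mul_one_div, div_self ha.ne', div_self hb.ne', mul_inv_cancel₀ ha.ne', mul_inv_cancel₀ hb.ne']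

theorem log_beta_diagonal_convex (k : ℝ) (hk : 0 ≤ k) :
    ConvexOn ℝ (Set.Ioi (0 : ℝ)) (fun x => Real.log (Beta x (x + k))) := by
  refine convexOn_iff_forall_pos.mpr ⟨convex_Ioi _, fun x hx y hy a b ha hb hab => ?_⟩
  simp only [smul_eq_mul, mem_Ioi] at hx hy ⊢
  have hBx : 0 < Beta x (x + k) := Beta_pos hx (by linarith)
  have hBy : 0 < Beta y (y + k) := Beta_pos hy (by linarith)
  rw [← log_rpow hBx, ← log_rpow hBy, ← log_mul (by positivity) (by positivity)]
  apply log_le_log (Beta_pos (by positivity) (by positivity))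
  exact Beta_holder hk hx hy ha hb hab
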